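/- For the power series S(z) := (e^{z/2} - e^{-z/2})/z = Σ_{i≥0} s_i z^{2i}, and for any positive integer k, the convolution identity Σ_{k_1+k_2=k, k_1,k_2 ≥ 0} S(w k_1) S(w k_2) k_1 k_2 = (1/w^2)·( k (e^{wk/2} + e^{-wk/2}) − ((e^{w/2}+e^{-w/2})/(e^{w/2}−e^{-w/2}))·(e^{wk/2} − e^{-wk/2}) ) holds as an identity of formal Laurent series in w. -/

import Mathlib

noncomputable section

/-- The exponential `e^{rw}` as a formal power series in `w` over `ℚ`. -/
def expSeries (r : ℚ) : PowerSeries ℚ :=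
  PowerSeries.mk fun n => r ^ n / n.factorial

/-- `S(w·m)` where `S(z) = sinh(z/2)/(z/2) = ∑ z^{2i}/(2^{2i} (2i+1)!)`, as a power series in `w`. -/
def Sser (m : ℕ) : PowerSeries ℚ :=
  PowerSeries.mk fun n =>
    if Even n then ((m : ℚ)) ^ n / (2 ^ n * (n + 1).factorial) else 0

/-- Inclusion of power series into Laurent series. -/
def toL (f : PowerSeries ℚ) : LaurentSeries ℚ := HahnSeries.ofPowerSeries ℤ ℚ f

lemma expSeries_eq_rescale (r : ℚ) :
    expSeries r = PowerSeries.rescale r (PowerSeries.exp ℚ) := by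
  ext n
  simp [expSeries, PowerSeries.coeff_rescale, PowerSeries.coeff_exp,
    algebraMap, div_eq_mul_inv]

lemma expSeries_mul (a b : ℚ) : expSeries a * expSeries b = expSeries (a + b) := by
  rw [expSeries_eq_rescale, expSeries_eq_rescale, expSeries_eq_rescale,
    PowerSeries.exp_mul_exp_eq_exp_add]

lemma emul (a b : ℚ) :
    toL (expSeries a) * toL (expSeries b) = toL (expSeries (a + b)) := by
  rw [toL, toL, toL, ← map_mul, expSeries_mul]

/-- `w · m · S(wm) = e^{wm/2} - e^{-wm/2}` as power series. -/
lemma X_mul_Sser (m : ℕ) :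
    PowerSeries.X * ((m : PowerSeries ℚ) * Sser m)
      = expSeries ((m : ℚ) / 2) - expSeries (-((m : ℚ) / 2)) := by
  ext n
  cases n with
  | zero =>
    simp [PowerSeries.coeff_zero_X_mul, expSeries]
  | succ n =>
    rw [PowerSeries.coeff_succ_X_mul]
    have hc : (PowerSeries.C (m : ℚ)) = ((m : ℕ) : PowerSeries ℚ) := by
      simp
    rw [map_sub, ← hc, PowerSeries.coeff_C_mul]
    simp only [Sser, expSeries, PowerSeries.coeff_mk]
    by_cases h : Even n
    · rw [if_pos h]
      have hodd : Odd (n + 1) := Even.add_one h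
      rw [hodd.neg_pow]
      have h2 : ((n : ℚ) + 1) ≠ 0 := by positivity
      have hfac : ((n + 1).factorial : ℚ) ≠ 0 := by
        exact_mod_cast Nat.factorial_ne_zero (n + 1)
      field_simp
      rw [div_pow]; field_simp; ring
    · rw [if_neg h]
      have heven : Even (n + 1) := Nat.even_add_one.mpr h
      rw [heven.neg_pow, sub_self, mul_zero]

lemma key (m : ℕ) :
    toL PowerSeries.X * ((m : LaurentSeries ℚ) * toL (Sser m))
      = toL (expSeries ((m : ℚ) / 2)) - toL (expSeries (-((m : ℚ) / 2))) := by
  have h := congrArg (HahnSeries.ofPowerSeries ℤ ℚ) (X_mul_Sser m)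
  rw [map_mul, map_mul, map_sub, map_natCast] at h
  exact h

/-- The purely algebraic convolution identity, for any commutative ring
with a multiplicative-exponential map `e : ℚ → R`. -/
theorem abstract_id {R : Type*} [CommRing R] (e : ℚ → R)
    (he : ∀ a b, e a * e b = e (a + b)) (k : ℕ) :
    (e (1/2) - e (-(1/2))) *
      ∑ pq ∈ Finset.HasAntidiagonal.antidiagonal k,
        (e ((pq.1 : ℚ) / 2) - e (-((pq.1 : ℚ) / 2))) *
          (e ((pq.2 : ℚ) / 2) - e (-((pq.2 : ℚ) / 2))) =
    (e (1/2) - e (-(1/2))) * (k : R) * (e ((k : ℚ) / 2) + e (-((k : ℚ) / 2))) -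
      (e (1/2) + e (-(1/2))) * (e ((k : ℚ) / 2) - e (-((k : ℚ) / 2))) := by
  have hDe : ∀ x : ℚ, (e (1/2) - e (-(1/2))) * e x = e (x + 1/2) - e (x - 1/2) := by
    intro x
    rw [sub_mul, he, he, show (1:ℚ)/2 + x = x + 1/2 from by ring,
      show -(1/2 : ℚ) + x = x - 1/2 from by ring]
  -- rewrite the antidiagonal sum as a range sum
  rw [Finset.Nat.sum_antidiagonal_eq_sum_range_succ_mk]
  have hterm : ∀ p ∈ Finset.range (k + 1),
      (e ((p : ℚ) / 2) - e (-((p : ℚ) / 2))) *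
          (e (((k - p : ℕ) : ℚ) / 2) - e (-(((k - p : ℕ) : ℚ) / 2)))
        = e ((k : ℚ) / 2) + e (-((k : ℚ) / 2))
            - (e ((p : ℚ) - (k : ℚ) / 2) + e ((k : ℚ) / 2 - (p : ℚ))) := by
    intro p hp
    have hple : p ≤ k := Nat.lt_succ_iff.mp (Finset.mem_range.mp hp)
    have hq : ((k - p : ℕ) : ℚ) = (k : ℚ) - (p : ℚ) := by
      push_cast [Nat.cast_sub hple]; ring
    rw [hq, sub_mul, mul_sub, mul_sub, he, he, he, he]
    have e1 : e ((p:ℚ)/2 + ((k:ℚ) - p)/2) = e ((k:ℚ)/2) := by congr 1; ring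
    have e2 : e ((p:ℚ)/2 + -(((k:ℚ) - p)/2)) = e ((p:ℚ) - (k:ℚ)/2) := by congr 1; ring
    have e3 : e (-((p:ℚ)/2) + ((k:ℚ) - p)/2) = e ((k:ℚ)/2 - (p:ℚ)) := by congr 1; ring
    have e4 : e (-((p:ℚ)/2) + -(((k:ℚ) - p)/2)) = e (-((k:ℚ)/2)) := by congr 1; ring
    rw [e1, e2, e3, e4]
    ring
  rw [Finset.sum_congr rfl hterm, Finset.sum_sub_distrib, Finset.sum_const,
    Finset.card_range]
  -- telescoping sums
  have tel1 : ∑ p ∈ Finset.range (k + 1),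
      (e ((p : ℚ) - (k : ℚ)/2 + 1/2) - e ((p : ℚ) - (k : ℚ)/2 - 1/2))
      = e ((k : ℚ)/2 + 1/2) - e (-((k : ℚ)/2) - 1/2) := by
    have h := Finset.sum_range_sub (fun p : ℕ => e ((p : ℚ) - (k : ℚ)/2 - 1/2)) (k + 1)
    have h2 : ∀ p : ℕ, e (((p + 1 : ℕ) : ℚ) - (k : ℚ)/2 - 1/2)
        = e ((p : ℚ) - (k : ℚ)/2 + 1/2) := by
      intro p; congr 1; push_cast; ring
    calc ∑ p ∈ Finset.range (k + 1),
          (e ((p : ℚ) - (k : ℚ)/2 + 1/2) - e ((p : ℚ) - (k : ℚ)/2 - 1/2))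
        = ∑ p ∈ Finset.range (k + 1),
            (e (((p + 1 : ℕ) : ℚ) - (k : ℚ)/2 - 1/2) - e ((p : ℚ) - (k : ℚ)/2 - 1/2)) := by
          refine Finset.sum_congr rfl fun p _ => ?_; rw [h2]
      _ = e (((k + 1 : ℕ) : ℚ) - (k : ℚ)/2 - 1/2) - e (((0 : ℕ) : ℚ) - (k : ℚ)/2 - 1/2) := h
      _ = e ((k : ℚ)/2 + 1/2) - e (-((k : ℚ)/2) - 1/2) := by
          congr 1 <;> · congr 1; push_cast; ring
  have tel2 : ∑ p ∈ Finset.range (k + 1),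
      (e ((k : ℚ)/2 - (p : ℚ) + 1/2) - e ((k : ℚ)/2 - (p : ℚ) - 1/2))
      = e ((k : ℚ)/2 + 1/2) - e (-((k : ℚ)/2) - 1/2) := by
    have h := Finset.sum_range_sub' (fun p : ℕ => e ((k : ℚ)/2 - (p : ℚ) + 1/2)) (k + 1)
    have h2 : ∀ p : ℕ, e ((k : ℚ)/2 - ((p + 1 : ℕ) : ℚ) + 1/2)
        = e ((k : ℚ)/2 - (p : ℚ) - 1/2) := by
      intro p; congr 1; push_cast; ring
    calc ∑ p ∈ Finset.range (k + 1),
          (e ((k : ℚ)/2 - (p : ℚ) + 1/2) - e ((k : ℚ)/2 - (p : ℚ) - 1/2))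
        = ∑ p ∈ Finset.range (k + 1),
            (e ((k : ℚ)/2 - (p : ℚ) + 1/2) - e ((k : ℚ)/2 - ((p + 1 : ℕ) : ℚ) + 1/2)) := by
          refine Finset.sum_congr rfl fun p _ => ?_; rw [h2]
      _ = e ((k : ℚ)/2 - ((0 : ℕ) : ℚ) + 1/2) - e ((k : ℚ)/2 - ((k + 1 : ℕ) : ℚ) + 1/2) := h
      _ = e ((k : ℚ)/2 + 1/2) - e (-((k : ℚ)/2) - 1/2) := by
          congr 1 <;> · congr 1; push_cast; ring
  have hT : (e (1/2) - e (-(1/2))) *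
      ∑ p ∈ Finset.range (k + 1), (e ((p : ℚ) - (k : ℚ)/2) + e ((k : ℚ)/2 - (p : ℚ)))
      = 2 * (e ((k : ℚ)/2 + 1/2) - e (-((k : ℚ)/2) - 1/2)) := by
    rw [Finset.mul_sum]
    calc ∑ p ∈ Finset.range (k + 1),
          (e (1/2) - e (-(1/2))) * (e ((p : ℚ) - (k : ℚ)/2) + e ((k : ℚ)/2 - (p : ℚ)))
        = ∑ p ∈ Finset.range (k + 1),
            ((e ((p : ℚ) - (k : ℚ)/2 + 1/2) - e ((p : ℚ) - (k : ℚ)/2 - 1/2))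
              + (e ((k : ℚ)/2 - (p : ℚ) + 1/2) - e ((k : ℚ)/2 - (p : ℚ) - 1/2))) := by
          refine Finset.sum_congr rfl fun p _ => ?_
          rw [mul_add, hDe, hDe]
      _ = 2 * (e ((k : ℚ)/2 + 1/2) - e (-((k : ℚ)/2) - 1/2)) := by
          rw [Finset.sum_add_distrib, tel1, tel2]; ring
  -- combine with D·A + B·C = 2·(e((k+1)/2) - e(-(k+1)/2))
  have hDA : (e (1/2) - e (-(1/2))) * (e ((k : ℚ)/2) + e (-((k : ℚ)/2)))
      + (e (1/2) + e (-(1/2))) * (e ((k : ℚ)/2) - e (-((k : ℚ)/2)))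
      = 2 * (e ((k : ℚ)/2 + 1/2) - e (-((k : ℚ)/2) - 1/2)) := by
    have m1 : e (1/2) * e ((k:ℚ)/2) = e ((k:ℚ)/2 + 1/2) := by rw [he]; congr 1; ring
    have m2 : e (1/2) * e (-((k:ℚ)/2)) = e (-((k:ℚ)/2) + 1/2) := by rw [he]; congr 1; ring
    have m3 : e (-(1/2)) * e ((k:ℚ)/2) = e ((k:ℚ)/2 - 1/2) := by rw [he]; congr 1; ring
    have m4 : e (-(1/2)) * e (-((k:ℚ)/2)) = e (-((k:ℚ)/2) - 1/2) := by rw [he]; congr 1; ring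
    calc (e (1/2) - e (-(1/2))) * (e ((k : ℚ)/2) + e (-((k : ℚ)/2)))
        + (e (1/2) + e (-(1/2))) * (e ((k : ℚ)/2) - e (-((k : ℚ)/2)))
        = 2 * (e (1/2) * e ((k:ℚ)/2)) - 2 * (e (-(1/2)) * e (-((k:ℚ)/2))) := by ring
      _ = 2 * (e ((k : ℚ)/2 + 1/2) - e (-((k : ℚ)/2) - 1/2)) := by
          rw [m1, m4]; ring
  rw [nsmul_eq_mul]
  push_cast
  linear_combination hDA - hT

/-- for every positive integer `k`, as Laurent series in `w`,
`∑_{k₁+k₂=k} S(w k₁) S(w k₂) k₁ k₂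
  = (1/w²)·( k (e^{wk/2} + e^{-wk/2}) − ((e^{w/2}+e^{-w/2})/(e^{w/2}−e^{-w/2}))·(e^{wk/2} − e^{-wk/2}) )`. -/
theorem Sser_convolution (k : ℕ) (hk : 1 ≤ k) :
    ∑ pq ∈ Finset.HasAntidiagonal.antidiagonal k,
        toL (Sser pq.1) * toL (Sser pq.2) * ((pq.1 : LaurentSeries ℚ)) * ((pq.2 : LaurentSeries ℚ)) =
      (toL PowerSeries.X ^ 2)⁻¹ *
        ((k : LaurentSeries ℚ) * (toL (expSeries (k / 2)) + toL (expSeries (-(k / 2)))) -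
          (toL (expSeries (1 / 2)) + toL (expSeries (-(1 / 2)))) /
              (toL (expSeries (1 / 2)) - toL (expSeries (-(1 / 2)))) *
            (toL (expSeries (k / 2)) - toL (expSeries (-(k / 2))))) := by
  have hX : toL PowerSeries.X ≠ 0 := by
    rw [toL, HahnSeries.ofPowerSeries_X]
    exact HahnSeries.single_ne_zero one_ne_zero
  have hD : toL (expSeries (1 / 2)) - toL (expSeries (-(1 / 2))) ≠ 0 := by
    intro h
    have h1 : toL (expSeries (1 / 2)) = toL (expSeries (-(1 / 2))) := sub_eq_zero.mp h
    have h2 : expSeries (1 / 2 : ℚ) = expSeries (-(1 / 2)) := by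
      exact HahnSeries.ofPowerSeries_injective h1
    have h3 := congrArg (PowerSeries.coeff 1) h2
    simp [expSeries] at h3
    norm_num at h3
  have hX2 : toL PowerSeries.X ^ 2 ≠ 0 := pow_ne_zero _ hX
  have hsum : (∑ pq ∈ Finset.HasAntidiagonal.antidiagonal k,
        toL (Sser pq.1) * toL (Sser pq.2) * ((pq.1 : LaurentSeries ℚ)) *
          ((pq.2 : LaurentSeries ℚ))) * toL PowerSeries.X ^ 2
      = ∑ pq ∈ Finset.HasAntidiagonal.antidiagonal k,
          (toL (expSeries ((pq.1 : ℚ) / 2)) - toL (expSeries (-((pq.1 : ℚ) / 2)))) *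
            (toL (expSeries ((pq.2 : ℚ) / 2)) - toL (expSeries (-((pq.2 : ℚ) / 2)))) := by
    rw [Finset.sum_mul]
    refine Finset.sum_congr rfl fun pq _ => ?_
    rw [← key pq.1, ← key pq.2]
    ring
  have habs := abstract_id (fun r : ℚ => toL (expSeries r)) emul k
  rw [inv_mul_eq_div, eq_div_iff hX2, hsum]
  apply mul_left_cancel₀ hD
  rw [habs]
  have hcancel : (toL (expSeries (1 / 2)) - toL (expSeries (-(1 / 2)))) *
      ((toL (expSeries (1 / 2)) + toL (expSeries (-(1 / 2)))) /
            (toL (expSeries (1 / 2)) - toL (expSeries (-(1 / 2)))) *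
          (toL (expSeries ((k : ℚ) / 2)) - toL (expSeries (-((k : ℚ) / 2)))))
      = (toL (expSeries (1 / 2)) + toL (expSeries (-(1 / 2)))) *
          (toL (expSeries ((k : ℚ) / 2)) - toL (expSeries (-((k : ℚ) / 2)))) := by
    rw [← mul_assoc, mul_comm (toL (expSeries (1 / 2)) - toL (expSeries (-(1 / 2))))
      ((toL (expSeries (1 / 2)) + toL (expSeries (-(1 / 2)))) /
        (toL (expSeries (1 / 2)) - toL (expSeries (-(1 / 2))))),
      div_mul_cancel₀ _ hD]
  linear_combination hcancel

end
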